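/- Main theorem (explicit form): Let m be a positive integer, n = 2m³, and let k be a positive integer with 2m² < ∏_{q prime, q < k} q. Then the n × n Boolean point-line incidence matrix M simultaneously satisfies: (1) M has at least m⁴ = (n/2)^{4/3} zero entries; (2) M contains no 2×2 all-zero submatrix; and (3) the covering number of M is at most k⁴, i.e., all one-entries of M can be covered by at most k⁴ all-one combinatorial rectangles. -/

import Mathlib

/-- `p` is a valid point/line index: `p ∈ [m] × [2m²]`. -/
def InRange (m : ℕ) (p : ℕ × ℕ) : Prop :=
  1 ≤ p.1 ∧ p.1 ≤ m ∧ 1 ≤ p.2 ∧ p.2 ≤ 2 * m ^ 2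

/-- The index set `[m] × [2m²]` of points (and of lines), as a finset. -/
def indexSet (m : ℕ) : Finset (ℕ × ℕ) :=
  Finset.Icc 1 m ×ˢ Finset.Icc 1 (2 * m ^ 2)

/-- The point `p` lies on the line `ℓ` (i.e. the matrix entry `M_{p,ℓ}` is zero). -/
def OnLine (p ℓ : ℕ × ℕ) : Prop := ℓ.1 * p.1 + ℓ.2 = p.2

/-- The set of zero entries of the point-line incidence matrix `M`. -/
def zeroEntries (m : ℕ) : Finset ((ℕ × ℕ) × (ℕ × ℕ)) :=
  (indexSet m ×ˢ indexSet m).filter fun x => x.2.1 * x.1.1 + x.2.2 = x.1.2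

/-- The primorialLT: the product of all primes strictly less than `k`. -/
def primorialLT (k : ℕ) : ℕ :=
  ∏ q ∈ (Finset.range k).filter Nat.Prime, q

/-- Main theorem (explicit form): for `n = 2m³` and `k` with `2m² < ∏_{q prime, q<k} q`,
the `n × n` point-line incidence matrix `M` has at least `m⁴ = (n/2)^{4/3}` zero
entries, has no `2 × 2` all-zero submatrix, and its one-entries can be covered by
at most `k⁴` all-one combinatorial rectangles. -/
def goodRect (m q a b : ℕ) : Set (ℕ × ℕ) × Set (ℕ × ℕ) :=
  ({p | InRange m p ∧ p.1 % q = a ∧ p.2 % q = b},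
   {ℓ | InRange m ℓ ∧ (ℓ.1 * a + ℓ.2) % q ≠ b})

def bigRect (m : ℕ) : Set (ℕ × ℕ) × Set (ℕ × ℕ) :=
  ({p | InRange m p ∧ p.2 ≤ m ^ 2}, {ℓ | InRange m ℓ ∧ m ^ 2 < ℓ.2})

lemma card_lemma (m n : ℕ) (hn : n = 2 * m ^ 3) : (indexSet m).card = n := by
  simp [indexSet, Nat.card_Icc, hn]; ring

lemma count_lemma (m : ℕ) : m ^ 4 ≤ (zeroEntries m).card := by
  have key := Finset.card_le_card_of_injOn
    (f := fun t : (ℕ × ℕ) × ℕ => ((t.2, t.1.1 * t.2 + t.1.2), t.1))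
    (s := (Finset.Icc 1 m ×ˢ Finset.Icc 1 (m ^ 2)) ×ˢ Finset.Icc 1 m)
    (t := zeroEntries m)
    (by
      rintro ⟨⟨l1, l2⟩, p1⟩ ht
      simp only [Finset.mem_coe, Finset.mem_product, Finset.mem_Icc] at ht
      simp only [Finset.mem_coe, zeroEntries, indexSet, Finset.mem_filter, Finset.mem_product,
        Finset.mem_Icc]
      refine ⟨⟨⟨⟨ht.2.1, ht.2.2⟩, ?_, ?_⟩, ⟨ht.1.1.1, ht.1.1.2⟩, ht.1.2.1, ?_⟩, ?_⟩
      · nlinarith [ht.1.2.1, ht.2.1]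
      · nlinarith [ht.1.1.2, ht.1.2.2, ht.2.2]
      · nlinarith [ht.1.2.2]
      · trivial)
    (by
      rintro ⟨⟨l1, l2⟩, p1⟩ _ ⟨⟨l1', l2'⟩, p1'⟩ _ h
      simp only [Prod.mk.injEq] at h
      obtain ⟨⟨h1, _⟩, h2, h3⟩ := h
      simp [h1, h2, h3])
  calc m ^ 4 = ((Finset.Icc 1 m ×ˢ Finset.Icc 1 (m ^ 2)) ×ˢ Finset.Icc 1 m).card := by
        simp [Nat.card_Icc]; ring
    _ ≤ _ := key

lemma real_lemma (m n : ℕ) (hn : n = 2 * m ^ 3) :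
    (m : ℝ) ^ 4 = ((n : ℝ) / 2) ^ ((4 : ℝ) / 3) := by
  have hm0 : (0 : ℝ) ≤ (m : ℝ) := Nat.cast_nonneg m
  subst hn
  push_cast
  have h1 : ((2 : ℝ) * (m : ℝ) ^ 3) / 2 = (m : ℝ) ^ 3 := by ring
  rw [h1, ← Real.rpow_natCast (m : ℝ) 3, ← Real.rpow_mul hm0]
  norm_num

lemma no2x2_lemma (m : ℕ) : ∀ p p' ℓ ℓ' : ℕ × ℕ,
    InRange m p → InRange m p' → InRange m ℓ → InRange m ℓ' →
    p ≠ p' → ℓ ≠ ℓ' →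
    ¬ (OnLine p ℓ ∧ OnLine p' ℓ ∧ OnLine p ℓ' ∧ OnLine p' ℓ') := by
  rintro p p' ℓ ℓ' hp hp' hl hl' hpp hll ⟨h1, h2, h3, h4⟩
  unfold OnLine at h1 h2 h3 h4
  obtain ⟨hp1, -, -, -⟩ := hp
  obtain ⟨hp'1, -, -, -⟩ := hp'
  have key : ((ℓ.1 : ℤ) - ℓ'.1) * ((p.1 : ℤ) - p'.1) = 0 := by
    have e1 : (ℓ.1 : ℤ) * p.1 + ℓ.2 = (ℓ'.1 : ℤ) * p.1 + ℓ'.2 := by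
      exact_mod_cast h1.trans h3.symm
    have e2 : (ℓ.1 : ℤ) * p'.1 + ℓ.2 = (ℓ'.1 : ℤ) * p'.1 + ℓ'.2 := by
      exact_mod_cast h2.trans h4.symm
    nlinarith [e1, e2]
  rcases mul_eq_zero.mp key with h | h
  · have hll1 : ℓ.1 = ℓ'.1 := by exact_mod_cast (by omega : (ℓ.1 : ℤ) = ℓ'.1)
    have e := h1.trans h3.symm
    rw [hll1] at e
    exact hll (Prod.ext hll1 (by omega))
  · have hpp1 : p.1 = p'.1 := by exact_mod_cast (by omega : (p.1 : ℤ) = p'.1)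
    have hpp2 : p.2 = p'.2 := by rw [← h1, ← h2, hpp1]
    exact hpp (Prod.ext hpp1 hpp2)

lemma cover_lemma (m k : ℕ) (hm : 1 ≤ m) (hk : 1 ≤ k)
    (hprim : 2 * m ^ 2 < primorialLT k) :
    ∃ R : Finset (Set (ℕ × ℕ) × Set (ℕ × ℕ)),
      R.card ≤ k ^ 4 ∧
      (∀ r ∈ R, (∀ p ∈ r.1, InRange m p) ∧ (∀ ℓ ∈ r.2, InRange m ℓ) ∧
        ∀ p ∈ r.1, ∀ ℓ ∈ r.2, ¬ OnLine p ℓ) ∧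
      (∀ p ℓ : ℕ × ℕ, InRange m p → InRange m ℓ → ¬ OnLine p ℓ →
        ∃ r ∈ R, p ∈ r.1 ∧ ℓ ∈ r.2) := by
  classical
  have hk2 : 2 ≤ k := by
    by_contra h
    have hk1 : k = 1 := by omega
    rw [hk1] at hprim
    have : primorialLT 1 = 1 := by decide
    have hm2 : 1 ≤ m ^ 2 := Nat.one_le_pow _ _ hm
    omega
  set T : Finset (ℕ × ℕ × ℕ) := Finset.range k ×ˢ Finset.range k ×ˢ Finset.range k with hT
  refine ⟨insert (bigRect m) (T.image fun t => goodRect m t.1 t.2.1 t.2.2), ?_, ?_, ?_⟩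
  · -- card bound
    have h1 : (T.image fun t => goodRect m t.1 t.2.1 t.2.2).card ≤ k ^ 3 := by
      calc _ ≤ T.card := Finset.card_image_le
        _ = k ^ 3 := by simp [hT]; ring
    have h2 : (insert (bigRect m) (T.image fun t => goodRect m t.1 t.2.1 t.2.2)).card ≤
        (T.image fun t => goodRect m t.1 t.2.1 t.2.2).card + 1 := Finset.card_insert_le _ _
    have h3 : k ^ 3 + 1 ≤ k ^ 4 := by
      have h4 : 1 ≤ k ^ 3 := Nat.one_le_pow _ _ (by omega)
      calc k ^ 3 + 1 ≤ k ^ 3 + k ^ 3 := by omega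
        _ = k ^ 3 * 2 := by ring
        _ ≤ k ^ 3 * k := Nat.mul_le_mul_left _ hk2
        _ = k ^ 4 := by ring
    omega
  · -- validity
    intro r hr
    rcases Finset.mem_insert.mp hr with rfl | hr
    · refine ⟨fun p hp => hp.1, fun ℓ hl => hl.1, ?_⟩
      rintro p hp ℓ hl honl
      unfold OnLine at honl
      obtain ⟨⟨hp1, -, -, -⟩, hp2⟩ := hp
      obtain ⟨⟨hl1, -, -, -⟩, hl2⟩ := hl
      nlinarith [honl]
    · obtain ⟨⟨q, a, b⟩, -, rfl⟩ := Finset.mem_image.mp hr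
      refine ⟨fun p hp => hp.1, fun ℓ hl => hl.1, ?_⟩
      rintro p hp ℓ hl honl
      unfold OnLine at honl
      obtain ⟨-, ha, hb⟩ := hp
      obtain ⟨-, hne⟩ := hl
      have ha' : p.1 % q = a := ha
      have hb' : p.2 % q = b := hb
      have hne' : (ℓ.1 * a + ℓ.2) % q ≠ b := hne
      apply hne'
      subst ha'
      calc (ℓ.1 * (p.1 % q) + ℓ.2) % q = (ℓ.1 * p.1 + ℓ.2) % q :=
            Nat.ModEq.add_right ℓ.2 (Nat.ModEq.mul_left ℓ.1 (Nat.mod_modEq p.1 q))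
        _ = p.2 % q := by rw [honl]
        _ = b := hb'
  · -- coverage
    intro p ℓ hp hl honl
    unfold OnLine at honl
    by_cases hc : ∀ q ∈ (Finset.range k).filter Nat.Prime,
        (ℓ.1 * p.1 + ℓ.2) % q = p.2 % q
    · obtain ⟨hp1, hp1', hp2, hp2'⟩ := hp
      obtain ⟨hl1, hl1', hl2, hl2'⟩ := hl
      have hxy : p.2 < ℓ.1 * p.1 + ℓ.2 := by
        by_contra hlt
        push_neg at hlt
        have hxlt : ℓ.1 * p.1 + ℓ.2 < p.2 := lt_of_le_of_ne hlt honl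
        have hdvd : primorialLT k ∣ p.2 - (ℓ.1 * p.1 + ℓ.2) :=
          Finset.prod_primes_dvd _
            (fun q hq => (Finset.mem_filter.mp hq).2.prime)
            (fun q hq => (Nat.modEq_iff_dvd' (le_of_lt hxlt)).mp (hc q hq))
        have := Nat.le_of_dvd (by omega) hdvd
        omega
      have hdvd : primorialLT k ∣ (ℓ.1 * p.1 + ℓ.2) - p.2 :=
        Finset.prod_primes_dvd _
          (fun q hq => (Finset.mem_filter.mp hq).2.prime)
          (fun q hq => (Nat.modEq_iff_dvd' (le_of_lt hxy)).mp (hc q hq).symm)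
      have hge := Nat.le_of_dvd (by omega) hdvd
      have hmul : ℓ.1 * p.1 ≤ m ^ 2 := by nlinarith
      exact ⟨bigRect m, Finset.mem_insert_self _ _,
        ⟨⟨hp1, hp1', hp2, hp2'⟩, by omega⟩,
        ⟨⟨hl1, hl1', hl2, hl2'⟩, by omega⟩⟩
    · push_neg at hc
      obtain ⟨q, hq, hne⟩ := hc
      have hqk : q < k := Finset.mem_range.mp (Finset.mem_filter.mp hq).1
      have hq0 : 0 < q := (Finset.mem_filter.mp hq).2.pos
      refine ⟨goodRect m q (p.1 % q) (p.2 % q), ?_, ⟨hp, rfl, rfl⟩, hl, ?_⟩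
      · apply Finset.mem_insert_of_mem
        apply Finset.mem_image.mpr
        refine ⟨(q, p.1 % q, p.2 % q), ?_, rfl⟩
        simp only [hT, Finset.mem_product, Finset.mem_range]
        exact ⟨hqk, lt_trans (Nat.mod_lt _ hq0) hqk, lt_trans (Nat.mod_lt _ hq0) hqk⟩
      · intro h
        apply hne
        calc (ℓ.1 * p.1 + ℓ.2) % q = (ℓ.1 * (p.1 % q) + ℓ.2) % q :=
              Nat.ModEq.add_right ℓ.2 (Nat.ModEq.mul_left ℓ.1 (Nat.mod_modEq p.1 q)).symm
          _ = p.2 % q := h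

theorem main_theorem (m n k : ℕ) (hm : 1 ≤ m) (hn : n = 2 * m ^ 3)
    (hk : 1 ≤ k) (hprim : 2 * m ^ 2 < primorialLT k) :
    -- M is an n × n matrix
    (indexSet m).card = n ∧
    -- (1) at least m⁴ = (n/2)^{4/3} zero entries
    (m ^ 4 ≤ (zeroEntries m).card ∧ (m : ℝ) ^ 4 = ((n : ℝ) / 2) ^ ((4 : ℝ) / 3)) ∧
    -- (2) no 2 × 2 all-zero submatrix
    (∀ p p' ℓ ℓ' : ℕ × ℕ, InRange m p → InRange m p' → InRange m ℓ → InRange m ℓ' →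
      p ≠ p' → ℓ ≠ ℓ' →
      ¬ (OnLine p ℓ ∧ OnLine p' ℓ ∧ OnLine p ℓ' ∧ OnLine p' ℓ')) ∧
    -- (3) covering number at most k⁴
    (∃ R : Finset (Set (ℕ × ℕ) × Set (ℕ × ℕ)),
      R.card ≤ k ^ 4 ∧
      (∀ r ∈ R, (∀ p ∈ r.1, InRange m p) ∧ (∀ ℓ ∈ r.2, InRange m ℓ) ∧
        ∀ p ∈ r.1, ∀ ℓ ∈ r.2, ¬ OnLine p ℓ) ∧
      (∀ p ℓ : ℕ × ℕ, InRange m p → InRange m ℓ → ¬ OnLine p ℓ →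
        ∃ r ∈ R, p ∈ r.1 ∧ ℓ ∈ r.2)) := by
  exact ⟨card_lemma m n hn, ⟨count_lemma m, real_lemma m n hn⟩, no2x2_lemma m,
    cover_lemma m k hm hk hprim⟩
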